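/- arXiv:2504.07005 — 2 statements merged into one kernel-verified Lean document; each statement's English description precedes it below -/
import Mathlib

section
/- For every f ∈ A one has φ(f) − f^p ∈ p·A; and for every integer n ≥ 1 and every f lying in the ideal (X^n) of A, the unique element g ∈ A with p·g = φ(f) − f^p also lies in (X^n). In other words, the δ-structure map δ(f) := (φ(f) − f^p)/p on A = W(k)⟦q−1⟧ maps the ideal ((q−1)^n) into itself for every n ≥ 1; hence δ^k((q−1)^n) ⊆ ((q−1)^n) for all k ≥ 1. -/
open Finset

/-- The Frobenius lift `φ` on `A = W(k)⟦X⟧`: it applies the Witt-vector Frobenius of `W(k)`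
to the coefficients and substitutes `X ↦ (1+X)^p − 1` (i.e. `q ↦ q^p` for `q = 1 + X`).
The coefficient of `X^m` in `φ(f)` is `∑_{n ≤ m} F(aₙ)·(coefficient of X^m in ((1+X)^p−1)^n)`,
which is the (finite) coefficientwise formula for this substitution since `(1+X)^p − 1` has
zero constant term. -/
noncomputable def frobSubst (p : ℕ) [Fact p.Prime] (k : Type*) [CommRing k]
    (f : PowerSeries (WittVector p k)) : PowerSeries (WittVector p k) :=
  PowerSeries.mk fun m =>
    ∑ n ∈ Finset.range (m + 1),
      WittVector.frobenius (PowerSeries.coeff n f) *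
        PowerSeries.coeff m (((1 + PowerSeries.X : PowerSeries (WittVector p k)) ^ p - 1) ^ n)


theorem psCharP (R : Type*) [CommRing R] (p : ℕ) [CharP R p] : CharP (PowerSeries R) p := by
  constructor
  intro n
  rw [← CharP.cast_eq_zero_iff R p n, ← map_natCast (PowerSeries.C (R := R)) n]
  constructor
  · intro h
    have := congrArg (PowerSeries.constantCoeff (R := R)) h
    simpa using this
  · intro h
    rw [h, map_zero]

theorem coeff_pow_char (p : ℕ) [Fact p.Prime] {R : Type*} [CommRing R] [CharP R p]
    (g : PowerSeries R) (m : ℕ) :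
    PowerSeries.coeff m (g ^ p) =
      (if p ∣ m then PowerSeries.coeff (m / p) g else 0) ^ p := by
  have hp : 0 < p := (Fact.out : p.Prime).pos
  set F := PowerSeries.trunc (m + 1) g with hF
  have hdvd : (PowerSeries.X : PowerSeries R) ^ (m + 1) ∣ g - (F : PowerSeries R) := by
    rw [PowerSeries.X_pow_dvd_iff]
    intro i hi
    rw [map_sub, PowerSeries.coeff_coe_trunc_of_lt hi, sub_self]
  have hdvd2 : (PowerSeries.X : PowerSeries R) ^ (m + 1) ∣ g ^ p - (F : PowerSeries R) ^ p :=
    hdvd.trans (sub_dvd_pow_sub_pow g _ p)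
  have h1 : PowerSeries.coeff m (g ^ p) = PowerSeries.coeff m ((F : PowerSeries R) ^ p) := by
    have := PowerSeries.X_pow_dvd_iff.mp hdvd2 m (Nat.lt_succ_self m)
    rw [map_sub, sub_eq_zero] at this
    exact this
  rw [h1, ← Polynomial.coe_pow, Polynomial.coeff_coe, ← Polynomial.map_frobenius_expand,
    Polynomial.coeff_map, Polynomial.coeff_expand hp, frobenius_def]
  by_cases hm : p ∣ m
  · rw [if_pos hm, if_pos hm, ← Polynomial.coeff_coe,
      PowerSeries.coeff_coe_trunc_of_lt (Nat.lt_succ_of_le (Nat.div_le_self m p))]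
  · rw [if_neg hm, if_neg hm]

theorem wv_p_dvd (p : ℕ) [Fact p.Prime] (k : Type*) [Field k] [CharP k p] [PerfectRing k p]
    (x : WittVector p k) : (p : WittVector p k) ∣ x ↔ x.coeff 0 = 0 := by
  constructor
  · rintro ⟨y, rfl⟩
    have hp0 : ((p : WittVector p k)).coeff 0 = 0 := by
      have h := WittVector.verschiebung_frobenius (1 : WittVector p k)
      rw [one_mul] at h
      rw [← h, WittVector.verschiebung_coeff_zero]
    rw [WittVector.mul_coeff_zero, hp0, zero_mul]
  · intro h
    obtain ⟨y, hy⟩ := (WittVector.frobenius_bijective p k).surjective (x.shift 1)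
    refine ⟨y, ?_⟩
    have h1 : x = WittVector.verschiebung (x.shift 1) := by
      have h2 := WittVector.eq_iterate_verschiebung (x := x) (n := 1)
        (fun i hi => by interval_cases i; exact h)
      simpa using h2
    rw [h1, ← hy, WittVector.verschiebung_frobenius, mul_comm]

/-- For every `f ∈ A = W(k)⟦X⟧` one has `φ(f) − f^p ∈ p·A`; and for every
`n ≥ 1` and every `f` in the ideal `(X^n)`, any `g ∈ A` with `p·g = φ(f) − f^p` also lies in
`(X^n)`.  In other words the δ-structure `δ(f) = (φ(f) − f^p)/p` on `A` maps the ideal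
`((q−1)^n)` into itself for every `n ≥ 1`. -/
theorem stmt12 (p : ℕ) [Fact p.Prime] (k : Type*) [Field k] [CharP k p] [PerfectRing k p] :
    (∀ f : PowerSeries (WittVector p k),
      frobSubst p k f - f ^ p ∈ Ideal.span {(p : PowerSeries (WittVector p k))}) ∧
    (∀ n : ℕ, 1 ≤ n → ∀ f ∈ Ideal.span {(PowerSeries.X : PowerSeries (WittVector p k)) ^ n},
      ∀ g : PowerSeries (WittVector p k),
        (p : PowerSeries (WittVector p k)) * g = frobSubst p k f - f ^ p →
          g ∈ Ideal.span {(PowerSeries.X : PowerSeries (WittVector p k)) ^ n}) := by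
  haveI : CharP (PowerSeries k) p := psCharP k p
  have hp : p.Prime := Fact.out
  have hpcast : (p : PowerSeries (WittVector p k)) = PowerSeries.C (p : WittVector p k) :=
    (map_natCast (PowerSeries.C (R := WittVector p k)) p).symm
  set π : WittVector p k →+* k := WittVector.constantCoeff with hπ
  have hπapp : ∀ x : WittVector p k, π x = x.coeff 0 := fun _ => rfl
  have hΦb : PowerSeries.map π
      (((1 + PowerSeries.X : PowerSeries (WittVector p k)) ^ p - 1)) =
      (PowerSeries.X : PowerSeries k) ^ p := by
    rw [map_sub, map_pow, map_add, map_one, PowerSeries.map_X, add_pow_char, one_pow,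
      add_sub_cancel_left]
  have key : ∀ (f : PowerSeries (WittVector p k)) (m : ℕ),
      π (PowerSeries.coeff m (frobSubst p k f)) = π (PowerSeries.coeff m (f ^ p)) := by
    intro f m
    have hRHS : π (PowerSeries.coeff m (f ^ p)) =
        (if p ∣ m then π (PowerSeries.coeff (m / p) f) else 0) ^ p := by
      rw [← PowerSeries.coeff_map, map_pow, coeff_pow_char p, PowerSeries.coeff_map]
    rw [hRHS]
    simp only [frobSubst, PowerSeries.coeff_mk]
    rw [map_sum]
    have hterm : ∀ n ∈ Finset.range (m + 1),
        π (WittVector.frobenius (PowerSeries.coeff n f) *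
            PowerSeries.coeff m
              (((1 + PowerSeries.X : PowerSeries (WittVector p k)) ^ p - 1) ^ n))
          = π (PowerSeries.coeff n f) ^ p * (if m = p * n then 1 else 0) := by
      intro n _
      rw [map_mul]
      congr 1
      · rw [hπapp, hπapp, WittVector.coeff_frobenius_charP]
      · rw [← PowerSeries.coeff_map, map_pow, hΦb, ← pow_mul, PowerSeries.coeff_X_pow]
    rw [Finset.sum_congr rfl hterm]
    by_cases hm : p ∣ m
    · obtain ⟨c, rfl⟩ := hm
      rw [if_pos ⟨c, rfl⟩, Nat.mul_div_cancel_left c hp.pos]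
      rw [Finset.sum_eq_single c]
      · rw [if_pos rfl, mul_one]
      · intro j _ hne
        rw [if_neg fun h => hne (Nat.eq_of_mul_eq_mul_left hp.pos h).symm, mul_zero]
      · intro hc
        exact absurd (Finset.mem_range.mpr
          (Nat.lt_succ_of_le (Nat.le_mul_of_pos_left c hp.pos))) hc
    · rw [if_neg hm, zero_pow hp.ne_zero]
      exact Finset.sum_eq_zero fun j _ => by
        rw [if_neg fun h => hm ⟨j, h⟩, mul_zero]
  constructor
  · intro f
    rw [Ideal.mem_span_singleton]
    have hcoef : ∀ m, (p : WittVector p k) ∣ PowerSeries.coeff m (frobSubst p k f - f ^ p) := by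
      intro m
      rw [wv_p_dvd p k, ← hπapp, map_sub, map_sub, key, sub_self]
    refine ⟨PowerSeries.mk fun m => (hcoef m).choose, ?_⟩
    refine PowerSeries.ext fun m => ?_
    rw [hpcast, PowerSeries.coeff_C_mul, PowerSeries.coeff_mk]
    exact (hcoef m).choose_spec
  · intro n hn f hf g hg
    rw [Ideal.mem_span_singleton] at hf
    rw [Ideal.mem_span_singleton, PowerSeries.X_pow_dvd_iff]
    have hf' := PowerSeries.X_pow_dvd_iff.mp hf
    intro m hm
    have h1 : PowerSeries.coeff m (f ^ p) = 0 :=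
      PowerSeries.X_pow_dvd_iff.mp (hf.trans (dvd_pow_self f hp.ne_zero)) m hm
    have h2 : PowerSeries.coeff m (frobSubst p k f) = 0 := by
      simp only [frobSubst, PowerSeries.coeff_mk]
      refine Finset.sum_eq_zero fun j hj => ?_
      rw [hf' j (lt_of_le_of_lt (Nat.lt_succ_iff.mp (Finset.mem_range.mp hj)) hm),
        map_zero, zero_mul]
    have hps : (p : WittVector p k) * PowerSeries.coeff m g = 0 := by
      have := congrArg (PowerSeries.coeff m) hg
      rw [hpcast, PowerSeries.coeff_C_mul] at this
      rw [this, map_sub, h1, h2, sub_zero]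
    exact (mul_eq_zero.mp hps).resolve_left (WittVector.p_nonzero p k)
end

section
/- Take m = 1 and write T := T_1, ε := ε_1, so S = ℤ[q][T][ε]/(ε² − (q−1)Tε). There exists a unique Witt vector c ∈ 𝕎(S) such that for every n ≥ 0 the n-th ghost component of c equals ε·T^{p^n−1}·[p^n]_q. (This is the ghost-component description, for the coordinate T, of the element c_ψ(T) of Proposition 4.4, which satisfies ψ̃(T) − ι̃(T) = [p]_q·c_ψ(T) for the δ-ring lifts of ψ and the inclusion.) -/
open Finset

/-- The q-analogue `[n]_t = ∑_{i=0}^{n-1} t^i`. -/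
def qan {A : Type*} [CommRing A] (t : A) (n : ℕ) : A := ∑ i ∈ Finset.range n, t ^ i

/-- `B := ℤ[q][T]`: the outer variable is `T`, the inner one is `q`. -/
abbrev BTq := Polynomial (Polynomial ℤ)

/-- `q ∈ B`. -/
noncomputable def qB : BTq := Polynomial.C Polynomial.X

/-- `T ∈ B`. -/
noncomputable def TB : BTq := Polynomial.X

/-- The polynomial `ε² − (q−1)·T·ε` over `B`. -/
noncomputable def relPoly : Polynomial BTq :=
  Polynomial.X ^ 2 - Polynomial.C ((qB - 1) * TB) * Polynomial.X

/-- `S := ℤ[q][T][ε]/(ε² − (q−1)·T·ε)`, a free `B`-module with basis `1, ε`. -/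
noncomputable abbrev SS := AdjoinRoot relPoly

/-- `ε ∈ S`. -/
noncomputable def epsS : SS := AdjoinRoot.root relPoly

-- helpers
lemma qan_succ {A : Type*} [CommRing A] (t : A) (n : ℕ) :
    qan t (n + 1) = 1 + t * qan t n := by
  rw [qan, Finset.sum_range_succ']
  simp [qan, Finset.mul_sum, pow_succ', add_comm]

lemma eps_sq : epsS * epsS =
    algebraMap BTq SS ((qB - 1) * TB) * epsS := by
  have h := AdjoinRoot.eval₂_root relPoly
  simp only [relPoly, Polynomial.eval₂_sub, Polynomial.eval₂_pow, Polynomial.eval₂_X,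
    Polynomial.eval₂_mul, Polynomial.eval₂_C, sub_eq_zero, pow_two] at h
  rw [AdjoinRoot.algebraMap_eq, epsS]
  have h' : AdjoinRoot.mk relPoly
      (Polynomial.X ^ 2 - Polynomial.C ((qB - 1) * TB) * Polynomial.X) = 0 :=
    AdjoinRoot.mk_self
  rw [map_sub, map_pow, map_mul, AdjoinRoot.mk_X, AdjoinRoot.mk_C, sub_eq_zero, pow_two] at h'
  exact h'

lemma pow_eps (k : ℕ) :
    (epsS + algebraMap BTq SS TB) ^ (k + 1) =
      algebraMap BTq SS TB ^ (k + 1) +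
        epsS * algebraMap BTq SS TB ^ k * qan (algebraMap BTq SS qB) (k + 1) := by
  induction k with
  | zero => simp [qan, add_comm]
  | succ k ih =>
    rw [pow_succ, ih]
    have := eps_sq
    rw [qan_succ _ (k+1)]
    ring_nf
    rw [show epsS ^ 2 = epsS * epsS from sq epsS, eps_sq]
    push_cast [map_mul, map_sub, map_one]
    ring

-- The rational coefficient ring and the embedding
abbrev FQ := Polynomial (Polynomial ℚ)

noncomputable def phiF : BTq →+* FQ :=
  Polynomial.mapRingHom (Polynomial.mapRingHom (Int.castRingHom ℚ))

lemma phiF_injective : Function.Injective phiF := by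
  apply Polynomial.map_injective
  exact Polynomial.map_injective _ Int.cast_injective

noncomputable def tF : FQ := (phiF qB - 1) * phiF TB

lemma phiF_qB : phiF qB = Polynomial.C Polynomial.X := by
  simp [phiF, qB, Polynomial.coe_mapRingHom]

lemma phiF_TB : phiF TB = Polynomial.X := by
  simp [phiF, TB, Polynomial.coe_mapRingHom]

lemma tF_ne_zero : tF ≠ 0 := by
  have h1 : phiF qB - 1 ≠ 0 := by
    rw [phiF_qB]
    intro h
    have := congrArg (fun f => Polynomial.coeff f 0) h
    simp [Polynomial.coeff_one, sub_eq_zero] at this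
    simpa [Polynomial.coeff_one] using congrArg (fun f => Polynomial.coeff f 1) this
  have h2 : phiF TB ≠ 0 := by
    rw [phiF_TB]; exact Polynomial.X_ne_zero
  exact mul_ne_zero h1 h2

lemma eval₂_rel : relPoly.eval₂ (phiF.prod phiF) ((0 : FQ), tF) = 0 := by
  simp only [relPoly, Polynomial.eval₂_sub, Polynomial.eval₂_pow, Polynomial.eval₂_X,
    Polynomial.eval₂_mul, Polynomial.eval₂_C]
  ext <;> simp [tF, pow_two]

noncomputable def PsiS : SS →+* FQ × FQ :=
  AdjoinRoot.lift (phiF.prod phiF) ((0 : FQ), tF) eval₂_rel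

lemma relPoly_monic : relPoly.Monic := by
  have h : ((Polynomial.C ((qB - 1) * TB)) * Polynomial.X).degree < 2 := by
    refine lt_of_le_of_lt (Polynomial.degree_mul_le _ _) ?_
    refine lt_of_le_of_lt (add_le_add_left Polynomial.degree_C_le _) ?_
    rw [Polynomial.degree_X]
    decide
  exact Polynomial.monic_X_pow_sub h

lemma PsiS_injective : Function.Injective PsiS := by
  intro x y hxy
  have hz : PsiS (x - y) = 0 := by rw [map_sub, hxy, sub_self]
  suffices h : ∀ z : SS, PsiS z = 0 → z = 0 by
    have := h _ hz; rwa [sub_eq_zero] at this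
  intro z hzero
  obtain ⟨g, rfl⟩ := AdjoinRoot.mk_surjective z
  set r := g %ₘ relPoly with hr
  have hmk : AdjoinRoot.mk relPoly g = AdjoinRoot.mk relPoly r := by
    rw [AdjoinRoot.mk_eq_mk]
    rw [hr, Polynomial.modByMonic_eq_sub_mul_div g relPoly]
    exact ⟨g /ₘ relPoly, by ring⟩
  have hdeg : r.degree ≤ 1 := by
    have h2 : relPoly.degree ≤ 2 := by
      apply le_trans (Polynomial.degree_sub_le _ _)
      simp only [Polynomial.degree_X_pow, max_le_iff]
      constructor
      · norm_num
      · apply le_trans (Polynomial.degree_mul_le _ _)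
        calc (Polynomial.C ((qB - 1) * TB)).degree + Polynomial.X.degree
            ≤ 0 + 1 := add_le_add Polynomial.degree_C_le (by simp)
          _ ≤ 2 := by norm_num
    have hlt : r.degree < 2 :=
      lt_of_lt_of_le (Polynomial.degree_modByMonic_lt g relPoly_monic) h2
    cases hdd : r.degree with
    | bot => exact bot_le
    | coe n =>
      rw [hdd] at hlt
      have h2 : n < 2 := by
        exact_mod_cast (by simpa [Nat.cast_withBot] using hlt : ((n:ℕ) : WithBot ℕ) < 2)
      have h3 := Nat.lt_succ_iff.mp h2
      simpa [Nat.cast_withBot] using (by exact_mod_cast h3 : ((n:ℕ) : WithBot ℕ) ≤ 1)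
  have hrep : r = Polynomial.C (r.coeff 1) * Polynomial.X + Polynomial.C (r.coeff 0) :=
    Polynomial.eq_X_add_C_of_degree_le_one hdeg
  rw [hmk] at hzero ⊢
  rw [PsiS, AdjoinRoot.lift_mk] at hzero
  rw [hrep] at hzero
  simp only [Polynomial.eval₂_add, Polynomial.eval₂_mul, Polynomial.eval₂_C,
    Polynomial.eval₂_X] at hzero
  have h0 : phiF (r.coeff 0) = 0 := by
    have := congrArg Prod.fst hzero
    simpa using this
  have h1 : phiF (r.coeff 1) = 0 := by
    have := congrArg Prod.snd hzero
    simp only [Prod.snd_add, Prod.snd_mul, RingHom.prod_apply, Prod.snd_zero] at this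
    have h1t : phiF (r.coeff 1) * tF = 0 := by
      rw [h0] at this; simpa [tF] using this
    rcases mul_eq_zero.mp h1t with h | h
    · exact h
    · exact absurd h tF_ne_zero
  have hc0 : r.coeff 0 = 0 := phiF_injective (by simpa using h0)
  have hc1 : r.coeff 1 = 0 := phiF_injective (by simpa using h1)
  rw [hrep, hc0, hc1]
  simp

lemma ghostComponent_map {R S' : Type*} [CommRing R] [CommRing S'] (p : ℕ) [Fact p.Prime]
    (f : R →+* S') (x : WittVector p R) (n : ℕ) :
    WittVector.ghostComponent n (WittVector.map f x) = f (WittVector.ghostComponent n x) := by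
  simp only [WittVector.ghostComponent_apply, MvPolynomial.aeval_def]
  rw [MvPolynomial.eval₂_comp_left f,
    show f ∘ x.coeff = (WittVector.map f x).coeff from
      funext fun k => (WittVector.map_coeff f x k).symm]
  congr 1
  exact Subsingleton.elim _ _

lemma map_qan (n : ℕ) : (algebraMap BTq SS) (qan qB n) = qan (algebraMap BTq SS qB) n := by
  simp [qan, map_sum, map_pow]

/-- (The case `m = 1`, `T := T₁`, `ε := ε₁`, so
`S = ℤ[q][T][ε]/(ε² − (q−1)Tε)`.)  There exists a unique Witt vector `c ∈ 𝕎(S)` whose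
`n`-th ghost component is `ε·T^{p^n−1}·[p^n]_q` for every `n ≥ 0`. -/
theorem stmt14 (p : ℕ) [Fact p.Prime] :
    ∃! c : WittVector p SS, ∀ n : ℕ,
      WittVector.ghostComponent n c =
        epsS * algebraMap _ _ (TB ^ (p ^ n - 1) * qan qB (p ^ n)) := by
  have hghost : ∀ n : ℕ,
      WittVector.ghostComponent n
        (WittVector.teichmuller p (epsS + algebraMap BTq SS TB)
          - WittVector.teichmuller p (algebraMap BTq SS TB)) =
        epsS * algebraMap _ _ (TB ^ (p ^ n - 1) * qan qB (p ^ n)) := by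
    intro n
    rw [map_sub, WittVector.ghostComponent_teichmuller, WittVector.ghostComponent_teichmuller]
    have hp : p ^ n = (p ^ n - 1) + 1 :=
      (Nat.succ_pred_eq_of_pos (pow_pos (Fact.out (p := p.Prime)).pos n)).symm
    rw [hp, pow_eps (p ^ n - 1), map_mul, map_pow, map_qan, ← hp]
    ring
  refine ⟨_, hghost, ?_⟩
  intro c hc
  letI : Invertible (p : ℚ) :=
    invertibleOfNonzero (by exact_mod_cast (Fact.out (p := p.Prime)).ne_zero)
  letI : Invertible (p : FQ × FQ) :=
    (Invertible.map (algebraMap ℚ (FQ × FQ)) (p : ℚ)).copy _ (by simp [map_natCast])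
  apply WittVector.map_injective PsiS PsiS_injective
  apply (WittVector.ghostMap.bijective_of_invertible p (FQ × FQ)).injective
  funext n
  rw [WittVector.ghostMap_apply, WittVector.ghostMap_apply,
    ghostComponent_map, ghostComponent_map, hc n, hghost n]
end
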